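/- Let d ≤ m be positive integers, H a d×m real matrix with rank d (full row rank), R a symmetric positive definite d×d real matrix, Σ₀ a symmetric positive definite m×m real matrix, μ₀ ∈ ℝ^m, and ŷ = Hμ₀. Define the posterior precision Σ₁⁻¹ = Σ₀⁻¹ + Hᵀ R⁻¹ H with Σ₁ its inverse, the Kalman gain K = Σ₁ Hᵀ R⁻¹, and for any observation y' ∈ ℝ^d the posterior mean μ(y') = μ₀ + K(y' − ŷ). Fix an observation y ∈ ℝ^d, and define the posterior influence function PIF(y^c) = (1/2)(μ(y) − μ(y^c))ᵀ Σ₁⁻¹ (μ(y) − μ(y^c)) = (1/2)(y − y^c)ᵀ Kᵀ Σ₁⁻¹ K (y − y^c). Then PIF is unbounded: for every M ∈ ℝ there exists y^c ∈ ℝ^d with PIF(y^c) > M. Hence the standard Kalman filter posterior is not outlier robust. -/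

import Mathlib

open Matrix

/-- The Kalman posterior precision `Σ₁⁻¹ = Σ₀⁻¹ + Hᵀ R⁻¹ H`. -/
noncomputable def kfPrec {d m : ℕ} (H : Matrix (Fin d) (Fin m) ℝ)
    (R : Matrix (Fin d) (Fin d) ℝ) (S0 : Matrix (Fin m) (Fin m) ℝ) :
    Matrix (Fin m) (Fin m) ℝ :=
  S0⁻¹ + Hᵀ * R⁻¹ * H

/-- The Kalman gain `K = Σ₁ Hᵀ R⁻¹`. -/
noncomputable def kfGain {d m : ℕ} (H : Matrix (Fin d) (Fin m) ℝ)
    (R : Matrix (Fin d) (Fin d) ℝ) (S0 : Matrix (Fin m) (Fin m) ℝ) :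
    Matrix (Fin m) (Fin d) ℝ :=
  (kfPrec H R S0)⁻¹ * Hᵀ * R⁻¹

/-- The posterior influence function of the standard Kalman filter,
`PIF(y^c) = (1/2)(y − y^c)ᵀ Kᵀ Σ₁⁻¹ K (y − y^c)`. -/
noncomputable def kfPIF {d m : ℕ} (H : Matrix (Fin d) (Fin m) ℝ)
    (R : Matrix (Fin d) (Fin d) ℝ) (S0 : Matrix (Fin m) (Fin m) ℝ)
    (y yc : Fin d → ℝ) : ℝ :=
  (1 / 2) * ((y - yc) ⬝ᵥ ((kfGain H R S0)ᵀ * kfPrec H R S0 * kfGain H R S0).mulVec (y - yc))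

lemma kfPrec_posDef {d m : ℕ} (H : Matrix (Fin d) (Fin m) ℝ)
    {R : Matrix (Fin d) (Fin d) ℝ} (hR : R.PosDef)
    {S0 : Matrix (Fin m) (Fin m) ℝ} (hS0 : S0.PosDef) : (kfPrec H R S0).PosDef := by
  have h1 : (S0⁻¹).PosDef := hS0.inv
  have h2 : (Hᵀ * R⁻¹ * H).PosSemidef := by
    have := (hR.inv.posSemidef).conjTranspose_mul_mul_same H
    simpa using this
  exact h1.add_posSemidef h2

/-- Lemmas D.1/D.3: the posterior influence function of the standard (extended) Kalman
filter is unbounded, so the filter is not outlier robust. -/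
theorem kf_pif_unbounded {d m : ℕ} (hd : 0 < d) (hm : 0 < m) (hdm : d ≤ m)
    (H : Matrix (Fin d) (Fin m) ℝ) (hH : H.rank = d)
    (R : Matrix (Fin d) (Fin d) ℝ) (hR : R.PosDef)
    (S0 : Matrix (Fin m) (Fin m) ℝ) (hS0 : S0.PosDef)
    (μ₀ : Fin m → ℝ) (y : Fin d → ℝ) :
    ∀ M : ℝ, ∃ yc : Fin d → ℝ, M < kfPIF H R S0 y yc := by
  intro M
  set P := kfPrec H R S0 with hPdef
  have hP : P.PosDef := kfPrec_posDef H hR hS0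
  set K := kfGain H R S0 with hKdef
  -- a nonzero test vector
  set v : Fin d → ℝ := Pi.single ⟨0, hd⟩ 1 with hvdef
  have hv : v ≠ 0 := by
    intro h
    have := congrFun h ⟨0, hd⟩
    simp [hvdef] at this
  -- `Hᵀ` has injective `mulVec`
  have hHT : Function.Injective (Hᵀ).mulVec := by
    rw [← Matrix.coe_mulVecLin]
    rw [← LinearMap.ker_eq_bot]
    have hrank : Hᵀ.rank = d := by rw [Matrix.rank_transpose]; exact hH
    have hrn := LinearMap.finrank_range_add_finrank_ker (Hᵀ.mulVecLin)
    rw [show Module.finrank ℝ (Fin d → ℝ) = d by simp] at hrn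
    have : Module.finrank ℝ (LinearMap.ker Hᵀ.mulVecLin) = 0 := by
      have : Hᵀ.rank = Module.finrank ℝ (LinearMap.range Hᵀ.mulVecLin) := rfl
      omega
    exact Submodule.finrank_eq_zero.mp this
  -- `K v ≠ 0`
  have hRu : R⁻¹.mulVec v ≠ 0 := by
    have : Function.Injective (R⁻¹).mulVec :=
      Matrix.mulVec_injective_iff_isUnit.mpr (hR.inv.isUnit)
    intro h
    exact hv (this (by simpa using h))
  have hHu : Hᵀ.mulVec (R⁻¹.mulVec v) ≠ 0 := by
    intro h
    exact hRu (hHT (by simpa using h))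
  have hKv : K.mulVec v ≠ 0 := by
    have hinj : Function.Injective (P⁻¹).mulVec :=
      Matrix.mulVec_injective_iff_isUnit.mpr (hP.inv.isUnit)
    intro h
    apply hHu
    apply hinj
    simpa [hKdef, kfGain, ← hPdef, Matrix.mulVec_mulVec, Matrix.mul_assoc] using h
  -- the quadratic form value
  set u : Fin m → ℝ := K.mulVec v with hudef
  set c : ℝ := u ⬝ᵥ P.mulVec u with hcdef
  have hc : 0 < c := by
    have := hP.dotProduct_mulVec_pos hKv
    simpa [hcdef] using this
  have hquad : ∀ w : Fin d → ℝ, w ⬝ᵥ (Kᵀ * P * K).mulVec w = (K.mulVec w) ⬝ᵥ P.mulVec (K.mulVec w) := by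
    intro w
    rw [← Matrix.mulVec_mulVec, ← Matrix.mulVec_mulVec, Matrix.dotProduct_mulVec,
      Matrix.vecMul_transpose]
  -- choose the scale
  set t : ℝ := Real.sqrt ((2 * |M| + 2) / c) with htdef
  have htsq : t ^ 2 = (2 * |M| + 2) / c := by
    apply Real.sq_sqrt
    positivity
  refine ⟨y - t • v, ?_⟩
  have hyc : y - (y - t • v) = t • v := by abel
  have hval : kfPIF H R S0 y (y - t • v) = (1 / 2) * (t ^ 2 * c) := by
    rw [kfPIF, hyc]
    rw [hquad (t • v)]
    rw [Matrix.mulVec_smul, smul_dotProduct, Matrix.mulVec_smul, dotProduct_smul]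
    rw [smul_eq_mul, smul_eq_mul, ← hudef, ← hcdef]
    ring
  rw [hval, htsq]
  have : 1 / 2 * ((2 * |M| + 2) / c * c) = |M| + 1 := by
    field_simp
  rw [this]
  calc M ≤ |M| := le_abs_self M
    _ < |M| + 1 := by linarith
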